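/- For every positive integer n ≥ 2, the Mersenne number 2^n − 1 divisible by a prime p ≡ 1 (mod n) whenever n ≠ 6; in particular for n ≠ 6, there exists a prime p with p ≡ 1 (mod n) and p dividing 2^n − 1. -/
import Mathlib
open Polynomial Finset

private lemma two_pow_gt : ∀ p : ℕ, 2 ≤ p → p + 1 < 2 ^ p := by
  intro p
  induction p with
  | zero => omega
  | succ q ih =>
    intro h
    rcases Nat.lt_or_ge q 2 with hq | hq
    · interval_cases q <;> first | omega | norm_num
    · have := ih hq
      have : 2 ^ q ≤ 2 ^ (q+1) := Nat.pow_le_pow_right (by norm_num) (by omega)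
      omega

private lemma two_pow_gt' : ∀ p : ℕ, 5 ≤ p → 3 * p + 1 ≤ 2 ^ p := by
  intro p
  induction p with
  | zero => omega
  | succ q ih =>
    intro h
    rcases Nat.lt_or_ge q 5 with hq | hq
    · interval_cases q <;> first | omega | norm_num
    · have h1 := ih hq
      have : 2 ^ (q+1) = 2 * 2 ^ q := by ring
      omega

private lemma pow_one_add (p t : ℤ) : ∀ i : ℕ, ∃ v : ℤ, (1 + p*t)^i = 1 + i*p*t + p^2*v := by
  intro i
  induction i with
  | zero => exact ⟨0, by norm_num⟩
  | succ j ih =>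
    obtain ⟨v, hv⟩ := ih
    refine ⟨v + j*t^2 + p*v*t, ?_⟩
    have : (1 + p*t)^(j+1) = (1 + p*t)^j * (1 + p*t) := by ring
    rw [this, hv]
    push_cast
    ring

private lemma geom_sum_key {p : ℕ} (hp : p.Prime) (hodd : p ≠ 2) {x : ℤ} (hx : (p:ℤ) ∣ x - 1) :
    ∃ u : ℤ, ∑ i ∈ range p, x ^ i = p + (p:ℤ)^2 * u := by
  obtain ⟨t, ht⟩ := hx
  have hx1 : x = 1 + p*t := by linarith
  have key : ∀ N : ℕ, ∃ u : ℤ, 2 * ∑ i ∈ range N, x ^ i = 2*N + p*t*(N*(N-1)) + 2*(p:ℤ)^2*u := by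
    intro N
    induction N with
    | zero => exact ⟨0, by simp⟩
    | succ M ih =>
      obtain ⟨u, hu⟩ := ih
      obtain ⟨v, hv⟩ := pow_one_add p t M
      refine ⟨u + v, ?_⟩
      rw [Finset.sum_range_succ, mul_add, hu, hx1, hv]
      push_cast
      ring
  obtain ⟨u, hu⟩ := key p
  obtain ⟨w, hw⟩ := (hp.odd_of_ne_two hodd)
  have hwz : (p:ℤ) = 2*w+1 := by omega
  refine ⟨t*w + u, ?_⟩
  have h2 : (2:ℤ) * (∑ i ∈ range p, x ^ i) = 2 * ((p:ℤ) + (p:ℤ)^2 * (t*w + u)) := by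
    rw [hu, hwz]; ring
  exact mul_left_cancel₀ (by norm_num) h2


-- structure lemma: if 2 is a root of cyclotomic n mod p, then 2 is a primitive
-- (ordCompl[p] n)-th root of unity mod p
private lemma prim_root {n p : ℕ} [hp : Fact p.Prime] (hn : n ≠ 0)
    (hroot : (cyclotomic n (ZMod p)).IsRoot 2) :
    IsPrimitiveRoot (2 : ZMod p) (ordCompl[p] n) := by
  have hmdvd : ¬ p ∣ ordCompl[p] n := Nat.not_dvd_ordCompl hp.out hn
  haveI : NeZero ((ordCompl[p] n : ℕ) : ZMod p) :=
    ⟨fun h => hmdvd ((ZMod.natCast_eq_zero_iff _ _).mp h)⟩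
  rw [show n = p ^ (n.factorization p) * (ordCompl[p] n) from
    (Nat.ordProj_mul_ordCompl_eq_self n p).symm] at hroot
  exact isRoot_cyclotomic_prime_pow_mul_iff_of_charP.mp hroot

-- evaluation via expand
private lemma eval_cyclotomic_pow {p m : ℕ} (hp : p.Prime) :
    ∀ (j : ℕ) (y : ℤ), (cyclotomic (p ^ (j+1) * m) ℤ).eval y
      = (cyclotomic (p * m) ℤ).eval (y ^ (p ^ j)) := by
  intro j
  induction j with
  | zero => intro y; simp
  | succ i ih =>
    intro y
    have h1 : p ^ (i + 1 + 1) * m = (p ^ (i+1) * m) * p := by ring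
    have hdvd : p ∣ p ^ (i+1) * m := Dvd.dvd.mul_right (dvd_pow_self p (Nat.succ_ne_zero i)) m
    rw [h1, ← cyclotomic_expand_eq_cyclotomic hp hdvd ℤ, expand_eval,
      ih (y ^ p), ← pow_mul, ← pow_succ']

theorem exists_prime_one_mod_dvd_mersenne (n : ℕ) (hn : 2 ≤ n) (hn6 : n ≠ 6) :
    ∃ p : ℕ, p.Prime ∧ p % n = 1 ∧ p ∣ 2 ^ n - 1 := by
  have hn0 : n ≠ 0 := by omega
  set E : ℤ := (cyclotomic n ℤ).eval 2 with hE
  have hEpos : 0 < E := cyclotomic_pos' n (by norm_num)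
  set N : ℕ := E.natAbs with hNdef
  have hNE : (N : ℤ) = E := Int.natAbs_of_nonneg hEpos.le
  have hN1 : 1 < N := by
    have h := sub_one_lt_natAbs_cyclotomic_eval (n := n) (q := 2) (by omega) (by norm_num)
    norm_num at h
    omega
  have hEdvdZ : E ∣ (2:ℤ)^n - 1 := by
    have h := Polynomial.eval_dvd (x := (2:ℤ)) (cyclotomic.dvd_X_pow_sub_one n ℤ)
    simpa using h
  have hNdvd : N ∣ 2^n - 1 := by
    have h1 : (1:ℕ) ≤ 2^n := Nat.one_le_two_pow
    have h2 : (N:ℤ) ∣ ((2^n - 1 : ℕ) : ℤ) := by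
      rw [hNE]; push_cast [h1]; exact hEdvdZ
    exact_mod_cast h2
  -- 2^n - 1 is odd
  have hM1 : 1 ≤ 2^n := Nat.one_le_two_pow
  have hModd : ¬ 2 ∣ 2^n - 1 := by
    have h2 : 2 ∣ 2^n := dvd_pow_self 2 hn0
    omega
  have hroot : ∀ p : ℕ, p.Prime → p ∣ N → (cyclotomic n (ZMod p)).IsRoot (2 : ZMod p) := by
    intro p hp hpN
    haveI := Fact.mk hp
    have hcast : ((E : ZMod p)) = 0 := by
      have hdvd : (p:ℤ) ∣ E := by rw [← hNE]; exact_mod_cast hpN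
      exact (ZMod.intCast_zmod_eq_zero_iff_dvd _ _).mpr hdvd
    have hkey : eval (2 : ZMod p) (cyclotomic n (ZMod p))
        = (Int.castRingHom (ZMod p)) (eval 2 (cyclotomic n ℤ)) := by
      rw [← map_cyclotomic_int n (ZMod p), eval_map,
        show (2 : ZMod p) = (Int.castRingHom (ZMod p)) 2 by norm_num, eval₂_at_apply]
    rw [IsRoot.def, hkey]
    exact hcast
  have hodd : ∀ p : ℕ, p.Prime → p ∣ N → p ≠ 2 ∧ (2 : ZMod p) ≠ 0 := by
    intro p hp hpN
    haveI := Fact.mk hp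
    constructor
    · rintro rfl; exact hModd (hpN.trans hNdvd)
    · intro h
      have h2 : p ∣ 2 := by
        have := (ZMod.natCast_eq_zero_iff 2 p).mp (by exact_mod_cast h)
        exact this
      have : p = 2 := (Nat.prime_dvd_prime_iff_eq hp Nat.prime_two).mp h2
      subst this
      exact hModd (hpN.trans hNdvd)
  by_cases hex : ∃ p : ℕ, p.Prime ∧ p ∣ N ∧ ¬ p ∣ n
  · obtain ⟨p, hp, hpN, hpn⟩ := hex
    haveI := Fact.mk hp
    haveI : NeZero ((n : ℕ) : ZMod p) :=
      ⟨fun h => hpn ((ZMod.natCast_eq_zero_iff _ _).mp h)⟩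
    have hprim : IsPrimitiveRoot (2 : ZMod p) n :=
      (isRoot_cyclotomic_iff).mp (hroot p hp hpN)
    have hord : n ∣ p - 1 := by
      rw [hprim.eq_orderOf]
      exact ZMod.orderOf_dvd_card_sub_one (hodd p hp hpN).2
    have hp1 : p % n = 1 := by
      obtain ⟨c, hc⟩ := hord
      have h2 : 2 ≤ p := hp.two_le
      have hc' : p = n * c + 1 := by omega
      rw [hc', Nat.mul_add_mod, Nat.mod_eq_of_lt (by omega)]
    exact ⟨p, hp, hp1, hpN.trans hNdvd⟩
  · exfalso
    push_neg at hex
    obtain ⟨p, hp, hpN⟩ := Nat.exists_prime_and_dvd (show N ≠ 1 by omega)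
    haveI := Fact.mk hp
    have hpn : p ∣ n := hex p hp hpN
    obtain ⟨hp2, h2ne⟩ := hodd p hp hpN
    have hp3 : 3 ≤ p := by
      have := hp.two_le; omega
    set k := n.factorization p with hk
    set m := ordCompl[p] n with hm
    have hk1 : 1 ≤ k := hp.factorization_pos_of_dvd hn0 hpn
    have hnkm : p ^ k * m = n := Nat.ordProj_mul_ordCompl_eq_self n p
    have hm0 : m ≠ 0 := (Nat.ordCompl_pos p hn0).ne'
    have hprim : IsPrimitiveRoot (2 : ZMod p) m := prim_root hn0 (hroot p hp hpN)
    have hm1 : m ≠ 1 := by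
      intro hmeq
      rw [hmeq] at hprim
      have h21 : (2 : ZMod p) = 1 := by simpa using hprim.pow_eq_one
      have : ((1 : ℕ) : ZMod p) = 0 := by
        push_cast
        linear_combination h21
      have := (ZMod.natCast_eq_zero_iff 1 p).mp this
      simp at this
      omega
    have hordm : m ∣ p - 1 := by
      rw [hprim.eq_orderOf]
      exact ZMod.orderOf_dvd_card_sub_one h2ne
    -- p is the largest prime factor of n (strictly)
    have hmlt : m < p := by
      have := Nat.le_of_dvd (by omega) hordm
      omega
    -- p^2 does not divide N
    have hsq : ¬ (p^2 ∣ N) := by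
      intro hsq
      set x : ℤ := 2 ^ (n / p) with hx
      have hnp1 : 1 ≤ n / p := (Nat.one_le_div_iff (by omega)).mpr (Nat.le_of_dvd (by omega) hpn)
      have hd : n / p ∈ n.properDivisors :=
        Nat.mem_properDivisors.mpr ⟨Nat.div_dvd_of_dvd hpn, Nat.div_lt_self (by omega) hp.one_lt⟩
      have hdvd2 : ((X : ℤ[X]) ^ (n/p) - 1) * cyclotomic n ℤ ∣ X ^ n - 1 :=
        X_pow_sub_one_mul_cyclotomic_dvd_X_pow_sub_one_of_dvd ℤ hd
      have hdvd3 : (x - 1) * E ∣ (2:ℤ)^n - 1 := by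
        have h := Polynomial.eval_dvd (x := (2:ℤ)) hdvd2
        simpa using h
      have hxp : (2:ℤ)^n = x ^ p := by
        rw [hx, ← pow_mul, Nat.div_mul_cancel hpn]
      have hgeom : (x - 1) * ∑ i ∈ range p, x ^ i = x^p - 1 := by
        rw [mul_comm, geom_sum_mul]
      have hx2 : (2:ℤ) ≤ x := by
        calc (2:ℤ) = 2^1 := (pow_one 2).symm
        _ ≤ 2 ^ (n/p) := pow_le_pow_right₀ (by norm_num) hnp1
      have hx1 : x - 1 ≠ 0 := by omega
      have hES : E ∣ ∑ i ∈ range p, x ^ i := by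
        refine (mul_dvd_mul_iff_left hx1).mp ?_
        rw [hgeom, ← hxp]
        exact hdvd3
      have hpx : (p:ℤ) ∣ x - 1 := by
        have h2m : (p:ℤ) ∣ 2^m - 1 := by
          have hpow : ((2:ZMod p))^m = 1 := hprim.pow_eq_one
          have hc : (((2:ℤ)^m - 1 : ℤ) : ZMod p) = 0 := by push_cast [hpow]; ring
          exact (ZMod.intCast_zmod_eq_zero_iff_dvd _ _).mp hc
        have hpk : p ^ k = p * p^(k-1) := by
          rw [← pow_succ']
          congr 1
          omega
        have hnp : n / p = p^(k-1) * m := by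
          have hn' : n = p * (p^(k-1) * m) := by rw [← hnkm, hpk]; ring
          rw [hn', Nat.mul_div_cancel_left _ hp.pos]
        have hmd : m ∣ n / p := ⟨p^(k-1), by rw [hnp]; ring⟩
        obtain ⟨c, hc⟩ := hmd
        have hdd : (2:ℤ)^m - 1 ∣ x - 1 := by
          rw [hx, hc, pow_mul]
          simpa using sub_dvd_pow_sub_pow ((2:ℤ)^m) 1 c
        exact h2m.trans hdd
      obtain ⟨u, hu⟩ := geom_sum_key hp hp2 hpx
      have hp2S : (p:ℤ)^2 ∣ ∑ i ∈ range p, x ^ i := by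
        have h1 : ((p:ℤ))^2 ∣ (N:ℤ) := by exact_mod_cast hsq
        exact h1.trans (hNE ▸ hES)
      rw [hu] at hp2S
      have hpp : (p:ℤ)^2 ∣ (p:ℤ) := by
        have h3 : (p:ℤ)^2 ∣ ((p:ℤ) + (p:ℤ)^2*u) - (p:ℤ)^2*u := dvd_sub hp2S ⟨u, rfl⟩
        simpa using h3
      have h4 : (p:ℕ)^2 ∣ p := by exact_mod_cast hpp
      have h5 := Nat.le_of_dvd (by omega) h4
      nlinarith [hp.two_le]
    -- all prime divisors of N are p, so N = p
    have hNp : N = p := by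
      have hlarge : ∀ r, r.Prime → r ∣ N → ∀ q, q.Prime → q ∣ n → q ≤ r := by
        intro r hr hrN q hq hqn
        haveI := Fact.mk hr
        have hrn : r ∣ n := hex r hr hrN
        obtain ⟨hr2, hr2ne⟩ := hodd r hr hrN
        have hr3 : 3 ≤ r := by have := hr.two_le; omega
        have hprimr : IsPrimitiveRoot (2 : ZMod r) (ordCompl[r] n) :=
          prim_root hn0 (hroot r hr hrN)
        have hordr : ordCompl[r] n ∣ r - 1 := by
          rw [hprimr.eq_orderOf]; exact ZMod.orderOf_dvd_card_sub_one hr2ne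
        by_cases hqr : q = r
        · omega
        · have hq' : q ∣ ordCompl[r] n := by
            have h1 : q ∣ r ^ (n.factorization r) * ordCompl[r] n := by
              rw [Nat.ordProj_mul_ordCompl_eq_self]; exact hqn
            rcases (Nat.Prime.dvd_mul hq).mp h1 with h | h
            · exact absurd ((Nat.prime_dvd_prime_iff_eq hq hr).mp (hq.dvd_of_dvd_pow h)) hqr
            · exact h
          have h2 := Nat.le_of_dvd (by omega) (hq'.trans hordr)
          omega
      have huniq : ∀ {q : ℕ}, q.Prime → q ∣ N → q = p := by
        intro q hq hqN
        have h1 := hlarge q hq hqN p hp hpn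
        have h2 := hlarge p hp hpN q hq (hex q hq hqN)
        omega
      have hNpow := Nat.eq_prime_pow_of_unique_prime_dvd (show N ≠ 0 by omega) huniq
      set j := N.primeFactorsList.length with hj
      have hj1 : j ≠ 0 := by
        intro h
        rw [h, pow_zero] at hNpow
        omega
      have hj2 : j < 2 := by
        by_contra h
        push_neg at h
        exact hsq (by rw [hNpow]; exact pow_dvd_pow p h)
      have hj3 : j = 1 := by omega
      rw [hNpow, hj3, pow_one]
    -- size contradiction
    have hm2 : 2 ≤ m := (Nat.two_le_iff m).mpr ⟨hm0, hm1⟩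
    have hφm : m.totient ≠ 0 := (Nat.totient_pos.mpr (by omega)).ne'
    rcases Nat.lt_or_ge k 2 with hk2 | hk2
    · -- k = 1 : n = p * m
      have hk1' : k = 1 := by omega
      have hnpm : n = p * m := by rw [← hnkm, hk1', pow_one]
      have hp5 : 5 ≤ p := by
        rcases Nat.lt_or_ge p 5 with h | h
        · have hp3' : p = 3 := by
            rcases (show p = 3 ∨ p = 4 by omega) with h' | h'
            · exact h'
            · exfalso; rw [h'] at hp; norm_num at hp
          exfalso
          rw [hp3'] at hordm
          have hm2' : m = 2 := by
            have := Nat.le_of_dvd (by norm_num) hordm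
            omega
          exact hn6 (by rw [hnpm, hp3', hm2'])
        · exact h
      have hmp : ¬ p ∣ m := Nat.not_dvd_ordCompl hp hn0
      have hexp := cyclotomic_expand_eq_cyclotomic_mul hp hmp ℤ
      have heval : (cyclotomic m ℤ).eval ((2:ℤ)^p)
          = (cyclotomic (m*p) ℤ).eval 2 * (cyclotomic m ℤ).eval 2 := by
        have h := congrArg (Polynomial.eval (2:ℤ)) hexp
        rwa [expand_eval, eval_mul] at h
      have hmpn : m * p = n := by rw [hnpm]; ring
      rw [hmpn] at heval
      have hlow : (2^p - 1)^(m.totient) < ((cyclotomic m ℤ).eval ((2:ℤ)^p)).natAbs := by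
        have h := sub_one_pow_totient_lt_natAbs_cyclotomic_eval (n := m) (q := 2^p)
          (by omega) (Nat.one_lt_two_pow_iff.mpr (by omega)).ne'
        have hcast : (((2:ℕ)^p : ℕ) : ℤ) = (2:ℤ)^p := by push_cast; ring
        rwa [hcast] at h
      have hBpos : 0 < (cyclotomic m ℤ).eval 2 := cyclotomic_pos' m (by norm_num)
      set B := ((cyclotomic m ℤ).eval 2).natAbs with hB
      have hBE : ((B:ℤ)) = (cyclotomic m ℤ).eval 2 := Int.natAbs_of_nonneg hBpos.le
      have hup : B ≤ 3^(m.totient) := by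
        have hreal := cyclotomic_eval_le_add_one_pow_totient (q := (2:ℝ)) (by norm_num) m
        have htrans : (cyclotomic m ℝ).eval ((2:ℝ)) = (((cyclotomic m ℤ).eval 2 : ℤ) : ℝ) := by
          have h := cyclotomic.eval_apply (2:ℤ) m (algebraMap ℤ ℝ)
          simpa using h
        rw [htrans] at hreal
        have hfin : ((B:ℝ)) ≤ ((3:ℝ))^(m.totient) := by
          rw [show ((B:ℝ)) = (((B:ℤ)):ℝ) by push_cast; ring, hBE]
          convert hreal using 2
          norm_num
        exact_mod_cast hfin
      have hNabs : ((cyclotomic m ℤ).eval ((2:ℤ)^p)).natAbs = N * B := by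
        rw [heval, Int.natAbs_mul]
      have hchain : (2^p - 1)^(m.totient) < p * 3^(m.totient) := by
        have h1 : (2^p - 1)^(m.totient) < N * B := by rw [← hNabs]; exact hlow
        have h2 : N * B ≤ p * 3^(m.totient) := by
          rw [hNp]
          exact Nat.mul_le_mul_left p hup
        omega
      have h3p : 3*p ≤ 2^p - 1 := by
        have := two_pow_gt' p hp5
        omega
      have hcon : p * 3^(m.totient) ≤ (2^p-1)^(m.totient) := by
        calc p * 3^(m.totient) ≤ p^(m.totient) * 3^(m.totient) :=
              Nat.mul_le_mul_right _ (Nat.le_self_pow hφm p)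
        _ = (3*p)^(m.totient) := by rw [mul_pow]; ring
        _ ≤ (2^p-1)^(m.totient) := Nat.pow_le_pow_left h3p _
      omega
    · -- k ≥ 2
      have hnk : n = p^((k-1)+1) * m := by
        rw [← hnkm]
        congr 2
        omega
      have heval2 : E = (cyclotomic (p*m) ℤ).eval ((2:ℤ)^(p^(k-1))) := by
        conv_lhs => rw [hE, hnk]
        exact eval_cyclotomic_pow hp (k-1) 2
      have hpm1 : 1 < p * m := by nlinarith
      have hlow : (2^(p^(k-1)) - 1)^((p*m).totient) < N := by
        have h := sub_one_pow_totient_lt_natAbs_cyclotomic_eval (n := p*m) (q := 2^(p^(k-1)))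
          hpm1 (Nat.one_lt_two_pow_iff.mpr (by positivity)).ne'
        have hcast : (((2:ℕ)^(p^(k-1)) : ℕ) : ℤ) = (2:ℤ)^(p^(k-1)) := by push_cast; ring
        rw [hcast] at h
        rwa [hNdef, heval2]
      have hpk : p ≤ p^(k-1) := by
        calc p = p^1 := (pow_one p).symm
        _ ≤ p^(k-1) := Nat.pow_le_pow_right (by omega) (by omega)
      have h1 : 2^p ≤ 2^(p^(k-1)) := Nat.pow_le_pow_right (by norm_num) hpk
      have h2 := two_pow_gt p (by omega)
      have hφ : (p*m).totient ≠ 0 := (Nat.totient_pos.mpr (by omega)).ne'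
      have h3 : 2^(p^(k-1)) - 1 ≤ (2^(p^(k-1)) - 1)^((p*m).totient) := Nat.le_self_pow hφ _
      omega
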